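/- arXiv:1111.0519 — 5 statements merged into one kernel-verified Lean document; each statement's English description precedes it below -/
import Mathlib

section
/- Suppose D ≥ 3. If G is a closed connected (D+1)-colored graph of degree zero with 2k vertices, then G has at least one face containing exactly two vertices. More precisely, the number F₁ of faces with exactly two vertices satisfies F₁ = 2D + Σ_{s≥3}(s−2)F_s + (D(D−3)/2)·k > 0, where F_s is the number of faces with 2s vertices. -/
/-- Suppose `D ≥ 3` and `G` is a closed connected `(D+1)`-colored graph of degree
zero with `2k` vertices.  Encoding the face data by `F s` = number of faces with
`2s` vertices: degree zero gives `Σ_s F s = (D(D−1)/2)k + D` faces in total, and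
counting vertices face by face (each vertex lies in `D(D+1)/2` faces) gives
`Σ_s s·F s = (D(D+1)/2)k`.  Then
`F 1 = 2D + Σ_{s≥3}(s−2)·F s + (D(D−3)/2)·k`, and in particular `G` has at least
one face with exactly two vertices, `0 < F 1`. -/
theorem degree_zero_has_short_face (D k : ℕ) (hD : 3 ≤ D) (hk : 1 ≤ k)
    (F : ℕ →₀ ℕ) (h0 : F 0 = 0)
    (h1 : ∑ s ∈ F.support, F s = D * (D - 1) / 2 * k + D)
    (h2 : ∑ s ∈ F.support, s * F s = D * (D + 1) / 2 * k) :
    (F 1 : ℤ) = 2 * D + (∑ s ∈ F.support.filter (fun s => 3 ≤ s),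
        ((s : ℤ) - 2) * F s) + (D * (D - 3) / 2 : ℕ) * k ∧
    0 < F 1 := by
  set S : ℤ := ∑ s ∈ F.support.filter (fun s => 3 ≤ s), ((s : ℤ) - 2) * F s with hS
  -- split the full sum
  have hsplit : ∑ s ∈ F.support, ((s : ℤ) - 2) * F s
      = S + ∑ s ∈ F.support.filter (fun s => ¬ 3 ≤ s), ((s : ℤ) - 2) * F s := by
    rw [hS, Finset.sum_filter_add_sum_filter_not]
  have hsmall : ∑ s ∈ F.support.filter (fun s => ¬ 3 ≤ s), ((s : ℤ) - 2) * F s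
      = -(F 1 : ℤ) := by
    have hsub : F.support.filter (fun s => ¬ 3 ≤ s) ⊆ ({1, 2} : Finset ℕ) := by
      intro s hs
      simp only [Finset.mem_filter, Finsupp.mem_support_iff] at hs
      have hs0 : s ≠ 0 := by rintro rfl; exact hs.1 h0
      have := hs.2
      interval_cases s <;> simp_all
    rw [Finset.sum_subset hsub ?_]
    · norm_num
    · intro x hx hnx
      simp only [Finset.mem_filter, Finsupp.mem_support_iff, not_and, not_not] at hnx
      have hxle : ¬ 3 ≤ x := by
        simp only [Finset.mem_insert, Finset.mem_singleton] at hx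
        omega
      have hx0 : F x = 0 := by
        by_contra h
        exact hxle (hnx h)
      simp [hx0]
  have htotal : ∑ s ∈ F.support, ((s : ℤ) - 2) * F s
      = ((∑ s ∈ F.support, s * F s : ℕ) : ℤ) - 2 * ((∑ s ∈ F.support, F s : ℕ) : ℤ) := by
    push_cast
    rw [Finset.mul_sum, ← Finset.sum_sub_distrib]
    exact Finset.sum_congr rfl fun s _ => by ring
  -- division facts
  have hev : ∀ a b : ℕ, (a % 2 = 0 ∨ b % 2 = 0) → a * b / 2 * 2 = a * b := by
    intro a b h
    apply Nat.div_mul_cancel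
    rcases h with h | h
    · exact Dvd.dvd.mul_right (Nat.dvd_of_mod_eq_zero h) b
    · exact Dvd.dvd.mul_left (Nat.dvd_of_mod_eq_zero h) a
  have ha := hev D (D - 1) (by omega)
  have hb := hev D (D + 1) (by omega)
  have hc := hev D (D - 3) (by omega)
  set a : ℕ := D * (D - 1) / 2
  set b : ℕ := D * (D + 1) / 2
  set c : ℕ := D * (D - 3) / 2
  have ha' : (a : ℤ) * 2 = D * D - D := by
    have := congrArg (Nat.cast : ℕ → ℤ) ha
    push_cast [Nat.cast_sub (by omega : 1 ≤ D)] at this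
    linarith [this]
  have hb' : (b : ℤ) * 2 = D * D + D := by
    have := congrArg (Nat.cast : ℕ → ℤ) hb
    push_cast at this
    linarith [this]
  have hc' : (c : ℤ) * 2 = D * D - 3 * D := by
    have := congrArg (Nat.cast : ℕ → ℤ) hc
    push_cast [Nat.cast_sub (by omega : 3 ≤ D)] at this
    linarith [this]
  have habc : 2 * (a : ℤ) - b = c := by linarith
  have hprod : (2 * (a : ℤ) - b) * k = c * k := by rw [habc]
  have heq : S - (F 1 : ℤ) = (b : ℤ) * k - 2 * ((a : ℤ) * k + D) := by
    have h := hsplit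
    rw [hsmall, htotal, h1, h2] at h
    push_cast at h
    linarith
  have hprod' : 2 * ((a : ℤ) * k) - (b : ℤ) * k = (c : ℤ) * k := by
    linear_combination hprod
  have hmain : (F 1 : ℤ) = 2 * D + S + (c : ℤ) * k := by linarith
  have hSpos : 0 ≤ S := by
    apply Finset.sum_nonneg
    intro s hs
    simp only [Finset.mem_filter] at hs
    have h3 : (3 : ℤ) ≤ s := by exact_mod_cast hs.2
    exact mul_nonneg (by linarith) (by positivity)
  refine ⟨hmain, ?_⟩
  have : (0 : ℤ) < F 1 := by
    have hck : 0 ≤ (c : ℤ) * k := by positivity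
    have : (0 : ℤ) < 2 * D := by positivity
    omega
  exact_mod_cast this
end

section
/- Let B be a melonic D-colored graph encoded by its D-ary tree T_B with k vertices. Then there exists a unique melonic (D+1)-colored graph G with the same number of vertices that reduces to B upon deletion of all edges of color 0; its tree is obtained from T_B by attaching one leaf of color 0 to every vertex. -/
/-- Rooted `m`-ary colored trees, encoding melonic `m`-colored graphs:
each internal vertex has one child per color in `Fin m`. -/
inductive AryTree (m : ℕ) : Type
  | leaf : AryTree m
  | node : (Fin m → AryTree m) → AryTree m

/-- The number of internal vertices of a tree (one internal vertex per melon,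
i.e. per pair of graph vertices). -/
def AryTree.internalCount {m : ℕ} : AryTree m → ℕ
  | .leaf => 0
  | .node f => 1 + ∑ i : Fin m, (f i).internalCount

/-- Deleting all tree edges and leaves of color `0` from the tree of a melonic
`(D+1)`-colored graph: the component of the root is obtained by discarding the
color-`0` child of every vertex. -/
def AryTree.skel {D : ℕ} : AryTree (D + 1) → AryTree D
  | .leaf => .leaf
  | .node f => .node (fun i => (f i.succ).skel)

/-- Attaching a leaf of color `0` to every vertex of a `D`-ary tree. -/
def AryTree.attachZeroLeaf {D : ℕ} : AryTree D → AryTree (D + 1)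
  | .leaf => .leaf
  | .node f => .node (Fin.cases .leaf (fun i => (f i).attachZeroLeaf))

lemma AryTree.ic_zero_iff {m : ℕ} (g : AryTree m) : g.internalCount = 0 ↔ g = .leaf := by
  cases g with
  | leaf => simp [AryTree.internalCount]
  | node f => simp [AryTree.internalCount]

lemma AryTree.skel_le {D : ℕ} (g : AryTree (D + 1)) :
    g.skel.internalCount ≤ g.internalCount := by
  induction g with
  | leaf => exact le_rfl
  | node f ih =>
    simp only [AryTree.skel, AryTree.internalCount, Fin.sum_univ_succ]
    have : ∑ i : Fin D, ((f i.succ).skel).internalCount ≤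
        ∑ i : Fin D, (f i.succ).internalCount :=
      Finset.sum_le_sum fun i _ => ih i.succ
    omega

lemma AryTree.eq_attach {D : ℕ} (g : AryTree (D + 1))
    (h : g.internalCount = g.skel.internalCount) :
    g = g.skel.attachZeroLeaf := by
  induction g with
  | leaf => rfl
  | node f ih =>
    simp only [AryTree.skel, AryTree.internalCount, Fin.sum_univ_succ] at h
    have hle : ∀ i : Fin D, ((f i.succ).skel).internalCount ≤ (f i.succ).internalCount :=
      fun i => AryTree.skel_le _
    have hsum : ∑ i : Fin D, (f i.succ).internalCount ≤
        ∑ i : Fin D, ((f i.succ).skel).internalCount := by omega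
    have heq : ∀ i ∈ Finset.univ, (f (Fin.succ i)).internalCount
        = ((f (Fin.succ i)).skel).internalCount := by
      have := (Finset.sum_le_sum (fun i _ => hle i)).antisymm hsum
      exact fun i _ => ((Finset.sum_eq_sum_iff_of_le (fun i _ => hle i)).1 this i (Finset.mem_univ i)).symm
    have h0 : (f 0).internalCount = 0 := by
      have := Finset.sum_congr rfl heq
      omega
    have hf0 : f 0 = .leaf := (AryTree.ic_zero_iff _).1 h0
    simp only [AryTree.skel, AryTree.attachZeroLeaf]
    congr 1
    funext i
    refine Fin.cases ?_ (fun j => ?_) i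
    · simpa using hf0
    · simpa using ih j.succ (heq j (Finset.mem_univ j))

lemma AryTree.attach_skel {D : ℕ} (t : AryTree D) :
    t.attachZeroLeaf.skel = t ∧ t.attachZeroLeaf.internalCount = t.internalCount := by
  induction t with
  | leaf => exact ⟨rfl, rfl⟩
  | node f ih =>
    constructor
    · simp only [AryTree.attachZeroLeaf, AryTree.skel]
      congr 1
      funext i
      simpa using (ih i).1
    · simp only [AryTree.attachZeroLeaf, AryTree.internalCount, Fin.sum_univ_succ]
      simp only [Fin.cases_zero, Fin.cases_succ, AryTree.internalCount]
      rw [Finset.sum_congr rfl fun i _ => (ih i).2]; omega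

/-- Let `B` be a melonic `D`-colored graph, encoded by its `D`-ary tree `t` with
`k` vertices.  Then there is a unique melonic `(D+1)`-colored graph `G` with the
same number of vertices reducing to `B` upon deletion of all edges of color `0`
(i.e. whose tree `g` satisfies `g.skel = t` and has the same number of vertices);
moreover its tree is obtained from `t` by attaching one leaf of color `0` to
every vertex. -/
theorem unique_melonic_covering (D : ℕ) (t : AryTree D) :
    (∃! g : AryTree (D + 1),
        g.skel = t ∧ g.internalCount = t.internalCount) ∧
    (t.attachZeroLeaf.skel = t ∧
      t.attachZeroLeaf.internalCount = t.internalCount) := by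
  obtain ⟨hs, hc⟩ := AryTree.attach_skel t
  refine ⟨⟨t.attachZeroLeaf, ⟨hs, hc⟩, ?_⟩, hs, hc⟩
  rintro g ⟨hg1, hg2⟩
  have := AryTree.eq_attach g (by rw [hg1, hg2])
  rw [this, hg1]
end

section
/- Let B be a melonic D-colored graph with 2k vertices. There exists a unique melonic (D+1)-colored graph G with 4k vertices that reduces to B by deleting all edges of color 0 and such that no edge of color 0 of G connects two vertices of B; its tree is obtained from the tree of B by attaching to every vertex a color-0 tree edge ending in a new vertex. -/
/-- No vertex of `B` (i.e. no skeleton vertex) carries a leaf of color `0`: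
a color-`0` leaf at a skeleton vertex would be a color-`0` edge of `G`
connecting two vertices of `B`.  So the color-`0` child of every skeleton
vertex must be an internal vertex. -/
inductive AryTree.NoZeroEdgeInside : ∀ {D : ℕ}, AryTree (D + 1) → Prop
  | leaf {D : ℕ} : NoZeroEdgeInside (D := D) .leaf
  | node {D : ℕ} (f : Fin (D + 1) → AryTree (D + 1))
      (h0 : f 0 ≠ .leaf)
      (h : ∀ i : Fin D, NoZeroEdgeInside (f i.succ)) :
      NoZeroEdgeInside (.node f)

/-- Attaching to every vertex of a `D`-ary tree a color-`0` tree edge ending in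
a new vertex (a `(D+2)`-valent vertex carrying `D+1` leaves). -/
def AryTree.attachZeroMelon {D : ℕ} : AryTree D → AryTree (D + 1)
  | .leaf => .leaf
  | .node f => .node (Fin.cases (.node fun _ => .leaf) (fun i => (f i).attachZeroMelon))

lemma AryTree.internalCount_eq_zero {m : ℕ} {t : AryTree m} :
    t.internalCount = 0 ↔ t = .leaf := by
  cases t with
  | leaf => simp [internalCount]
  | node f => simp [internalCount]

lemma AryTree.one_le_internalCount {m : ℕ} {t : AryTree m} (h : t ≠ .leaf) :
    1 ≤ t.internalCount := by
  rcases Nat.eq_zero_or_pos t.internalCount with h0 | h0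
  · exact absurd (AryTree.internalCount_eq_zero.mp h0) h
  · exact h0

lemma AryTree.skel_attachZeroMelon {D : ℕ} (t : AryTree D) :
    t.attachZeroMelon.skel = t := by
  induction t with
  | leaf => rfl
  | node f ih =>
      simp only [attachZeroMelon, skel]
      congr 1
      funext i
      rw [Fin.cases_succ, ih]

lemma AryTree.noZero_attachZeroMelon {D : ℕ} (t : AryTree D) :
    t.attachZeroMelon.NoZeroEdgeInside := by
  induction t with
  | leaf => exact .leaf
  | node f ih =>
      refine .node _ ?_ ?_
      · rw [Fin.cases_zero]; exact fun h => nomatch h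
      · intro i; rw [Fin.cases_succ]; exact ih i

lemma AryTree.internalCount_attachZeroMelon {D : ℕ} (t : AryTree D) :
    t.attachZeroMelon.internalCount = 2 * t.internalCount := by
  induction t with
  | leaf => rfl
  | node f ih =>
      simp only [attachZeroMelon, internalCount, Fin.sum_univ_succ, Fin.cases_zero,
        Fin.cases_succ, ih]
      have hms : ∑ i : Fin D, 2 * (f i).internalCount =
          2 * ∑ i : Fin D, (f i).internalCount := (Finset.mul_sum _ _ _).symm
      simp only [Finset.sum_const_zero]
      omega

lemma AryTree.le_internalCount_of_noZero {D : ℕ} {g : AryTree (D + 1)}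
    (h : g.NoZeroEdgeInside) : 2 * g.skel.internalCount ≤ g.internalCount := by
  induction h with
  | leaf => simp [AryTree.skel, AryTree.internalCount]
  | node f h0 h ih =>
      simp only [AryTree.skel, AryTree.internalCount, Fin.sum_univ_succ]
      have h1 := AryTree.one_le_internalCount h0
      have h2 : ∑ i : Fin D, 2 * (f i.succ).skel.internalCount ≤
          ∑ i : Fin D, (f i.succ).internalCount :=
        Finset.sum_le_sum fun (i : Fin D) _ => ih i
      have hms : ∑ i : Fin D, 2 * (f i.succ).skel.internalCount =
          2 * ∑ i : Fin D, (f i.succ).skel.internalCount := (Finset.mul_sum _ _ _).symm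
      omega

lemma AryTree.eq_attach_of_noZero {D : ℕ} {g : AryTree (D + 1)}
    (h : g.NoZeroEdgeInside) (hc : g.internalCount = 2 * g.skel.internalCount) :
    g = g.skel.attachZeroMelon := by
  induction h with
  | leaf => rfl
  | node f h0 h ih =>
      simp only [AryTree.skel, AryTree.internalCount, Fin.sum_univ_succ] at hc
      have h1 := AryTree.one_le_internalCount h0
      have hterm : ∀ i ∈ (Finset.univ : Finset (Fin D)),
          2 * (f i.succ).skel.internalCount ≤ (f i.succ).internalCount :=
        fun (i : Fin D) _ => AryTree.le_internalCount_of_noZero (h i)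
      have h2 : ∑ i : Fin D, 2 * (f i.succ).skel.internalCount ≤
          ∑ i : Fin D, (f i.succ).internalCount := Finset.sum_le_sum hterm
      have hms : ∑ i : Fin D, 2 * (f i.succ).skel.internalCount =
          2 * ∑ i : Fin D, (f i.succ).skel.internalCount := (Finset.mul_sum _ _ _).symm
      have hc0 : (f 0).internalCount = 1 := by omega
      have hsum : ∑ i : Fin D, (f i.succ).internalCount =
          ∑ i : Fin D, 2 * (f i.succ).skel.internalCount := by omega
      have heach : ∀ i : Fin D,
          (f i.succ).internalCount = 2 * (f i.succ).skel.internalCount := by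
        intro i
        exact ((Finset.sum_eq_sum_iff_of_le hterm).mp hsum.symm i
          (Finset.mem_univ i)).symm
      have hf0 : f 0 = .node fun _ => .leaf := by
        cases h0' : f 0 with
        | leaf => exact absurd h0' h0
        | node f0 =>
            rw [h0'] at hc0
            simp only [AryTree.internalCount] at hc0
            have : ∀ i, (f0 i).internalCount = 0 := by
              intro i
              have := Finset.sum_eq_zero_iff.mp (by omega : ∑ i, (f0 i).internalCount = 0)
              exact this i (Finset.mem_univ i)
            congr 1
            funext i
            exact AryTree.internalCount_eq_zero.mp (this i)
      simp only [AryTree.skel, AryTree.attachZeroMelon]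
      congr 1
      funext i
      induction i using Fin.cases with
      | zero => rw [Fin.cases_zero]; exact hf0
      | succ i => rw [Fin.cases_succ]; exact ih i (heach i)
/-- Let `B` be a melonic `D`-colored graph with `2k` vertices, encoded by its
`D`-ary tree `t` with `k` vertices.  There exists a unique melonic
`(D+1)`-colored graph `G` with `4k` vertices that reduces to `B` by deleting all
edges of color `0` and such that no edge of color `0` of `G` connects two
vertices of `B`; its tree is obtained from `t` by attaching to every vertex a
color-`0` tree edge ending in a new vertex. -/
theorem unique_melonic_double_covering (D : ℕ) (t : AryTree D) :
    (∃! g : AryTree (D + 1),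
        g.skel = t ∧ g.NoZeroEdgeInside ∧
          g.internalCount = 2 * t.internalCount) ∧
    (t.attachZeroMelon.skel = t ∧ t.attachZeroMelon.NoZeroEdgeInside ∧
      t.attachZeroMelon.internalCount = 2 * t.internalCount) := by

  refine ⟨⟨t.attachZeroMelon, ⟨t.skel_attachZeroMelon, t.noZero_attachZeroMelon,
    t.internalCount_attachZeroMelon⟩, ?_⟩,
    t.skel_attachZeroMelon, t.noZero_attachZeroMelon, t.internalCount_attachZeroMelon⟩
  rintro g ⟨hs, hn, hc⟩
  subst hs
  exact AryTree.eq_attach_of_noZero hn hc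
end

section
/- In a planar connected closed 3-colored graph (colors 0,1,2) whose color-{1,2} subgraph is a single cycle through all 2k vertices, no two distinct edges of color 0 can share both their face of colors 0,1 and their face of colors 0,2. -/
/-- The number of cycles of a permutation of `Fin k`, counting fixed points
as (trivial) cycles. -/
def cycleCount {k : ℕ} (π : Equiv.Perm (Fin k)) : ℕ :=
  (k - π.support.card) + π.cycleType.card

namespace PlanarAux

open Equiv Equiv.Perm Module Submodule Function LinearMap

variable {k : ℕ}

/-- The operator `f ↦ f ∘ π - f` on `Fin k → ℚ`. -/
def T (π : Perm (Fin k)) : (Fin k → ℚ) →ₗ[ℚ] (Fin k → ℚ) :=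
  LinearMap.funLeft ℚ ℚ ⇑π - LinearMap.id

lemma T_apply (π : Perm (Fin k)) (f : Fin k → ℚ) (x : Fin k) :
    T π f x = f (π x) - f x := rfl

lemma mem_ker_T {π : Perm (Fin k)} {f : Fin k → ℚ} :
    f ∈ LinearMap.ker (T π) ↔ ∀ x, f (π x) = f x := by
  constructor
  · intro h x
    have := congrFun (LinearMap.mem_ker.mp h) x
    rw [T_apply, Pi.zero_apply, sub_eq_zero] at this
    exact this
  · intro h
    exact LinearMap.mem_ker.mpr (funext fun x => by rw [T_apply, h x, sub_self]; rfl)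

lemma ker_constant {π : Perm (Fin k)} {f : Fin k → ℚ}
    (hf : ∀ x, f (π x) = f x) {x y : Fin k} (h : π.SameCycle x y) : f x = f y := by
  have hnat : ∀ (g : Perm (Fin k)), (∀ z, f (g z) = f z) →
      ∀ (n : ℕ) (z : Fin k), f ((g ^ n) z) = f z := by
    intro g hg n
    induction n with
    | zero => intro z; simp
    | succ n ih =>
      intro z
      rw [pow_succ', Perm.mul_apply, hg ((g ^ n) z), ih z]
  have hinv : ∀ z, f (π⁻¹ z) = f z := by
    intro z
    have := hf (π⁻¹ z)
    rw [Perm.coe_inv, Equiv.apply_symm_apply] at this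
    exact this.symm
  obtain ⟨i, rfl⟩ := h
  cases i with
  | ofNat n =>
    rw [Int.ofNat_eq_coe, zpow_natCast]
    exact (hnat π hf n x).symm
  | negSucc n =>
    rw [zpow_negSucc, ← inv_pow]
    exact (hnat π⁻¹ hinv (n + 1) x).symm

/-- Classify each point by its fixed point or its cycle. -/
def phi (π : Perm (Fin k)) (x : Fin k) :
    {x : Fin k // π x = x} ⊕ {c : Perm (Fin k) // c ∈ π.cycleFactorsFinset} :=
  if h : π x = x then Sum.inl ⟨x, h⟩
  else Sum.inr ⟨π.cycleOf x, cycleOf_mem_cycleFactorsFinset_iff.mpr (mem_support.mpr h)⟩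

lemma phi_eq_of_sameCycle {π : Perm (Fin k)} {x y : Fin k} (h : π.SameCycle x y) :
    phi π x = phi π y := by
  by_cases hx : π x = x
  · obtain ⟨i, rfl⟩ := h
    rw [zpow_apply_eq_self_of_apply_eq_self hx]
  · have hy : ¬ π y = y := by
      intro hy
      obtain ⟨i, rfl⟩ := h.symm
      rw [zpow_apply_eq_self_of_apply_eq_self hy] at hx
      exact hx hy
    simp only [phi, dif_neg hx, dif_neg hy]
    exact congrArg _ (Subtype.ext h.cycleOf_eq)

lemma sameCycle_of_phi_eq {π : Perm (Fin k)} {x y : Fin k} (h : phi π x = phi π y) :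
    π.SameCycle x y := by
  by_cases hx : π x = x <;> by_cases hy : π y = y <;>
    simp only [phi, dif_pos, dif_neg, hx, hy] at h
  · cases h
    exact SameCycle.refl _ _
  · exact absurd h (by simp)
  · exact absurd h (by simp)
  · have hcyc : π.cycleOf x = π.cycleOf y := congrArg Subtype.val (Sum.inr_injective h)
    have hy' : y ∈ (π.cycleOf x).support := by
      rw [hcyc]
      exact mem_support_cycleOf_iff.mpr ⟨SameCycle.refl _ _, mem_support.mpr hy⟩
    exact (mem_support_cycleOf_iff.mp hy').1

lemma phi_surjective (π : Perm (Fin k)) : Surjective (phi π) := by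
  rintro (⟨x, hx⟩ | ⟨c, hc⟩)
  · exact ⟨x, by simp [phi, hx]⟩
  · obtain ⟨hc1, hc2⟩ := mem_cycleFactorsFinset_iff.mp hc
    obtain ⟨x, hx⟩ := Finset.nonempty_iff_ne_empty.mpr (support_eq_empty_iff.not.mpr hc1.ne_one)
    have hπx : π x = c x := (hc2 x hx).symm
    have hmove : ¬ π x = x := by
      rw [hπx]; exact mem_support.mp hx
    refine ⟨x, ?_⟩
    simp only [phi, dif_neg hmove]
    exact congrArg _ (Subtype.ext (cycle_is_cycleOf hx hc).symm)

lemma card_eq (π : Perm (Fin k)) :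
    cycleCount π =
      Fintype.card ({x : Fin k // π x = x} ⊕ {c : Perm (Fin k) // c ∈ π.cycleFactorsFinset}) := by
  rw [Fintype.card_sum, Fintype.card_subtype, Fintype.card_coe]
  have hsupp : π.support = Finset.univ.filter fun x => ¬ π x = x := by
    ext z
    simp [Equiv.Perm.mem_support]
  have h1 : (Finset.univ.filter fun x => π x = x).card + π.support.card = k := by
    have h := Finset.card_filter_add_card_filter_not
      (s := (Finset.univ : Finset (Fin k))) (p := fun x => π x = x)
    rw [hsupp]
    simpa using h
  have h2 : Multiset.card π.cycleType = π.cycleFactorsFinset.card := by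
    rw [cycleType_def, Multiset.card_map]
    rfl
  unfold cycleCount
  omega

lemma cycleCount_eq_finrank_ker (π : Perm (Fin k)) :
    cycleCount π = finrank ℚ (LinearMap.ker (T π)) := by
  set E : (({x : Fin k // π x = x} ⊕
      {c : Perm (Fin k) // c ∈ π.cycleFactorsFinset}) → ℚ) →ₗ[ℚ] (Fin k → ℚ) :=
    LinearMap.funLeft ℚ ℚ (phi π) with hE
  have hinj : Injective E := LinearMap.funLeft_injective_of_surjective ℚ ℚ _ (phi_surjective π)
  have hrange : LinearMap.range E = LinearMap.ker (T π) := by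
    apply le_antisymm
    · rintro f ⟨g, rfl⟩
      rw [mem_ker_T]
      intro x
      show g (phi π (π x)) = g (phi π x)
      rw [phi_eq_of_sameCycle (π := π) (x := π x) (y := x) ⟨-1, by simp⟩]
    · intro f hf
      rw [mem_ker_T] at hf
      refine ⟨f ∘ surjInv (phi_surjective π), funext fun x => ?_⟩
      show f (surjInv (phi_surjective π) (phi π x)) = f x
      apply (ker_constant hf _).symm
      apply sameCycle_of_phi_eq
      rw [surjInv_eq (phi_surjective π)]
  have : finrank ℚ (LinearMap.ker (T π)) = finrank ℚ (LinearMap.range E) := by rw [hrange]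
  rw [this, LinearMap.finrank_range_of_inj hinj, Module.finrank_fintype_fun_eq_card, card_eq]

lemma two_mul_card_cycleType_le (π : Perm (Fin k)) :
    2 * Multiset.card π.cycleType ≤ π.support.card := by
  have := Multiset.card_nsmul_le_sum (s := π.cycleType) (a := 2)
    (fun x hx => two_le_of_mem_cycleType hx)
  rw [sum_cycleType, smul_eq_mul, mul_comm] at this
  exact this

lemma support_card_le (π : Perm (Fin k)) : π.support.card ≤ k := by
  simpa using Finset.card_le_univ π.support

lemma cycleCount_le (π : Perm (Fin k)) : cycleCount π ≤ k := by
  have h1 := two_mul_card_cycleType_le π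
  have h2 := support_card_le π
  unfold cycleCount
  omega

lemma sign_eq_pow (π : Perm (Fin k)) :
    Equiv.Perm.sign π = (-1 : ℤˣ) ^ (k - cycleCount π) := by
  have h1 := two_mul_card_cycleType_le π
  have h2 := support_card_le π
  rw [sign_of_cycleType, sum_cycleType]
  have h3 : π.support.card + Multiset.card π.cycleType =
      (k - cycleCount π) + 2 * Multiset.card π.cycleType := by
    unfold cycleCount
    omega
  rw [h3, pow_add, pow_mul]
  norm_num

lemma cycleCount_ne_mul_swap (π : Perm (Fin k)) {w w' : Fin k} (hne : w ≠ w') :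
    cycleCount (π * Equiv.swap w w') ≠ cycleCount π := by
  intro h
  have hsign : Equiv.Perm.sign (π * Equiv.swap w w') = Equiv.Perm.sign π := by
    rw [sign_eq_pow, sign_eq_pow, h]
  rw [Equiv.Perm.sign_mul, Equiv.Perm.sign_swap hne] at hsign
  rcases Int.units_eq_one_or (Equiv.Perm.sign π) with hs | hs <;>
    rw [hs] at hsign <;> revert hsign <;> decide

/-- Splitting a cycle: multiplying by a transposition inside a cycle increases
the cycle count. -/
lemma count_lt_mul_swap {π : Perm (Fin k)} {w w' : Fin k} (hne : w ≠ w')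
    (h : π.SameCycle w w') :
    cycleCount π + 1 ≤ cycleCount (π * Equiv.swap w w') := by
  have hker : LinearMap.ker (T π) ≤ LinearMap.ker (T (π * Equiv.swap w w')) := by
    intro f hf
    rw [mem_ker_T] at hf ⊢
    have hconst : f w = f w' := ker_constant hf h
    intro x
    rw [Perm.mul_apply]
    by_cases hx : x = w
    · subst hx
      rw [Equiv.swap_apply_left, hf w', hconst]
    · by_cases hx' : x = w'
      · subst hx'
        rw [Equiv.swap_apply_right, hf w, hconst]
      · rw [Equiv.swap_apply_of_ne_of_ne hx hx', hf x]
  have hle : cycleCount π ≤ cycleCount (π * Equiv.swap w w') := by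
    rw [cycleCount_eq_finrank_ker, cycleCount_eq_finrank_ker]
    exact Submodule.finrank_mono hker
  have := cycleCount_ne_mul_swap π hne
  omega

/-- `funLeft` by a permutation, as a linear equivalence. -/
def funLeftEquiv (σ : Perm (Fin k)) : (Fin k → ℚ) ≃ₗ[ℚ] (Fin k → ℚ) :=
  LinearEquiv.ofLinear (LinearMap.funLeft ℚ ℚ ⇑σ) (LinearMap.funLeft ℚ ℚ ⇑σ⁻¹)
    (LinearMap.ext fun f => funext fun x => by
      simp [LinearMap.funLeft_apply])
    (LinearMap.ext fun f => funext fun x => by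
      simp [LinearMap.funLeft_apply])

lemma rank_T_mul_swap_le (ρ : Perm (Fin k)) {w w' : Fin k} (hne : w ≠ w') :
    finrank ℚ (LinearMap.range (T (ρ * Equiv.swap w w'))) ≤
      finrank ℚ (LinearMap.range (T ρ)) + 1 := by
  set σ := Equiv.swap w w' with hσ
  have hdecomp : T (ρ * σ) = (LinearMap.funLeft ℚ ℚ ⇑σ).comp (T ρ) + T σ := by
    apply LinearMap.ext
    intro f
    funext x
    show f ((ρ * σ) x) - f x = (T ρ f) (σ x) + (f (σ x) - f x)
    rw [T_apply, Perm.mul_apply]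
    ring
  set v : Fin k → ℚ := Pi.single w (1 : ℚ) - Pi.single w' 1 with hv
  have hTσ : ∀ f : Fin k → ℚ, T σ f = (f w' - f w) • v := by
    intro f
    funext x
    rw [T_apply]
    rcases eq_or_ne x w with hx | hx
    · rw [hσ, hx, Equiv.swap_apply_left, hv]
      simp only [Pi.smul_apply, Pi.sub_apply, Pi.single_eq_same,
        Pi.single_eq_of_ne hne, smul_eq_mul]
      ring
    · rcases eq_or_ne x w' with hx' | hx'
      · rw [hσ, hx', Equiv.swap_apply_right, hv]
        simp only [Pi.smul_apply, Pi.sub_apply, Pi.single_eq_same,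
          Pi.single_eq_of_ne (Ne.symm hne), smul_eq_mul]
        ring
      · rw [hσ, Equiv.swap_apply_of_ne_of_ne hx hx', hv]
        simp only [Pi.smul_apply, Pi.sub_apply, Pi.single_eq_of_ne hx,
          Pi.single_eq_of_ne hx', smul_eq_mul]
        ring
  have hsub : LinearMap.range (T (ρ * σ)) ≤
      LinearMap.range ((LinearMap.funLeft ℚ ℚ ⇑σ).comp (T ρ)) ⊔ (ℚ ∙ v) := by
    rintro g ⟨f, rfl⟩
    have hsplit : T (ρ * σ) f = (LinearMap.funLeft ℚ ℚ ⇑σ ∘ₗ T ρ) f + T σ f := by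
      rw [hdecomp]; rfl
    rw [hsplit, hTσ f]
    exact Submodule.add_mem_sup (LinearMap.mem_range_self _ f)
      (Submodule.smul_mem _ _ (Submodule.mem_span_singleton_self v))
  have hcomp : finrank ℚ (LinearMap.range ((LinearMap.funLeft ℚ ℚ ⇑σ).comp (T ρ))) =
      finrank ℚ (LinearMap.range (T ρ)) := by
    rw [LinearMap.range_comp]
    exact LinearEquiv.finrank_map_eq (funLeftEquiv σ) (LinearMap.range (T ρ))
  have hspan : finrank ℚ (ℚ ∙ v) = 1 := by
    apply finrank_span_singleton
    intro h0
    have hvw : v w = 0 := by rw [h0]; rfl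
    rw [hv] at hvw
    simp only [Pi.sub_apply, Pi.single_eq_same, Pi.single_eq_of_ne hne, sub_zero] at hvw
    exact one_ne_zero hvw
  have step1 : finrank ℚ (LinearMap.range (T (ρ * σ))) ≤
      finrank ℚ ↥(LinearMap.range ((LinearMap.funLeft ℚ ℚ ⇑σ).comp (T ρ)) ⊔ (ℚ ∙ v)) :=
    Submodule.finrank_mono hsub
  have step2 : finrank ℚ ↥(LinearMap.range ((LinearMap.funLeft ℚ ℚ ⇑σ).comp (T ρ)) ⊔ (ℚ ∙ v)) ≤
      finrank ℚ (LinearMap.range ((LinearMap.funLeft ℚ ℚ ⇑σ).comp (T ρ))) +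
        finrank ℚ (ℚ ∙ v) :=
    Submodule.finrank_add_le_finrank_add_finrank _ _
  rw [hcomp, hspan] at step2
  exact le_trans step1 step2

lemma count_le_mul_swap_add_one (ρ : Perm (Fin k)) {w w' : Fin k} (hne : w ≠ w') :
    cycleCount ρ ≤ cycleCount (ρ * Equiv.swap w w') + 1 := by
  have h1 := LinearMap.finrank_range_add_finrank_ker (T ρ)
  have h2 := LinearMap.finrank_range_add_finrank_ker (T (ρ * Equiv.swap w w'))
  rw [Module.finrank_fintype_fun_eq_card, Fintype.card_fin] at h1 h2
  have h3 := rank_T_mul_swap_le ρ hne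
  have h4 := cycleCount_eq_finrank_ker ρ
  have h5 := cycleCount_eq_finrank_ker (ρ * Equiv.swap w w')
  omega

lemma cycleCount_one : cycleCount (1 : Perm (Fin k)) = k := by
  unfold cycleCount
  rw [Equiv.Perm.support_one, Equiv.Perm.cycleType_one]
  simp

lemma eq_one_of_cycleCount {π : Perm (Fin k)} (h : k ≤ cycleCount π) : π = 1 := by
  have h1 := two_mul_card_cycleType_le π
  have h2 := support_card_le π
  have hs : π.support.card = 0 := by
    unfold cycleCount at h
    omega
  rw [← Equiv.Perm.support_eq_empty_iff]
  exact Finset.card_eq_zero.mp hs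

lemma cycleCount_finRotate (n : ℕ) : cycleCount (finRotate (n + 1)) = 1 := by
  cases n with
  | zero =>
    have : finRotate 1 = (1 : Perm (Fin 1)) := by
      apply Equiv.ext
      intro x
      exact Subsingleton.elim _ _
    rw [this, cycleCount_one]
  | succ m =>
    unfold cycleCount
    rw [support_finRotate, (isCycle_finRotate).cycleType, support_finRotate]
    simp

lemma genus_bound (n : ℕ) :
    ∀ d (π : Perm (Fin (n + 1))), (n + 1) - cycleCount π ≤ d →
      cycleCount π + cycleCount (finRotate (n + 1) * π) ≤ (n + 1) + 1 := by
  intro d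
  induction d with
  | zero =>
    intro π hπ
    have h1 := cycleCount_le π
    have hk : cycleCount π = n + 1 := by omega
    have : π = 1 := eq_one_of_cycleCount (by omega)
    subst this
    rw [mul_one, cycleCount_one, cycleCount_finRotate]
  | succ d ih =>
    intro π hπ
    by_cases hπ1 : π = 1
    · subst hπ1
      rw [mul_one, cycleCount_one, cycleCount_finRotate]
    · have hex : ∃ a, π a ≠ a := by
        by_contra hc
        push_neg at hc
        exact hπ1 (Equiv.ext hc)
      obtain ⟨a, ha⟩ := hex
      have hne : a ≠ π a := fun h => ha h.symm
      have hsc : π.SameCycle a (π a) := ⟨1, by rw [zpow_one]⟩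
      set σ := Equiv.swap a (π a) with hσ
      have h1 : cycleCount π + 1 ≤ cycleCount (π * σ) := count_lt_mul_swap hne hsc
      have h2 : cycleCount (π * σ) ≤ n + 1 := cycleCount_le _
      have h3 : (n + 1) - cycleCount (π * σ) ≤ d := by omega
      have h4 := ih (π * σ) h3
      have h5 : cycleCount (finRotate (n + 1) * π) ≤
          cycleCount ((finRotate (n + 1) * π) * σ) + 1 :=
        count_le_mul_swap_add_one _ hne
      rw [mul_assoc] at h5
      omega

end PlanarAux

/-- A closed 3-colored graph (colors 0,1,2) whose color-{1,2} subgraph is a single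
cycle through all `2k` vertices (`k = n+1`) is encoded by the permutation
`m : Fin k ≃ Fin k` matching, along the cycle `w₁ b₁ w₂ b₂ ⋯`, the white vertex
`w` to the black vertex `b_{m w}` by an edge of color 0.  Its faces of colors
0,1 are the cycles of `m` and its faces of colors 0,2 are the cycles of
`finRotate k · m`; planarity (genus 0) is `c(m) + c(finRotate k · m) = k + 1`.
In a planar such graph, no two distinct edges of color 0 (labeled by their white
endpoints `w ≠ w'`) can share both their face of colors 0,1 and their face of
colors 0,2. -/
theorem planar_no_shared_faces (n : ℕ) (m : Equiv.Perm (Fin (n + 1)))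
    (hplanar : cycleCount m + cycleCount (finRotate (n + 1) * m) = (n + 1) + 1) :
    ∀ w w' : Fin (n + 1), w ≠ w' →
      ¬(m.SameCycle w w' ∧ (finRotate (n + 1) * m).SameCycle w w') := by
  intro w w' hne ⟨h1, h2⟩
  set σ := Equiv.swap w w' with hσ
  have ha : cycleCount m + 1 ≤ cycleCount (m * σ) := PlanarAux.count_lt_mul_swap hne h1
  have hb : cycleCount (finRotate (n + 1) * m) + 1 ≤
      cycleCount ((finRotate (n + 1) * m) * σ) := PlanarAux.count_lt_mul_swap hne h2
  rw [mul_assoc] at hb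
  have hbound := PlanarAux.genus_bound n (n + 1) (m * σ) (by omega)
  omega
end

section
/- Let G^min be a minimal covering graph of a closed D-colored graph B, i.e., a (D+1)-colored graph obtained from B by adding a perfect matching of color-0 edges so as to maximize the number Σᵢ F^{0i} of faces containing color 0. Then any two distinct edges of color 0 of G^min share at most ⌊D/2⌋ of the faces of colors 0i (i = 1,…,D); in particular at most (D−1)/2 when D is odd and at most D/2 when D is even. -/
open scoped Classical

namespace MinCovAux

open Equiv Equiv.Perm Finset

variable {k : ℕ}

/-- The set of elements that are least in their cycle. -/
noncomputable def cycMins (π : Perm (Fin k)) : Finset (Fin k) :=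
  univ.filter (fun x => ∀ y, π.SameCycle x y → x ≤ y)

lemma mem_cycMins {π : Perm (Fin k)} {x : Fin k} :
    x ∈ cycMins π ↔ ∀ y, π.SameCycle x y → x ≤ y := by
  simp [cycMins]

lemma card_cycMins (π : Perm (Fin k)) : (cycMins π).card = cycleCount π := by
  classical
  have hsplit := Finset.card_filter_add_card_filter_not
    (s := cycMins π) (p := fun x => x ∈ π.support)
  have hfix : (cycMins π).filter (fun x => ¬ x ∈ π.support) = π.supportᶜ := by
    ext x
    simp only [mem_filter, Finset.mem_compl, mem_cycMins]
    constructor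
    · rintro ⟨-, hx⟩; exact hx
    · intro hx
      refine ⟨fun y hy => ?_, hx⟩
      obtain ⟨i, hi⟩ := hy
      have hfx : π x = x := by simpa [Equiv.Perm.mem_support] using hx
      rw [Equiv.Perm.zpow_apply_eq_self_of_apply_eq_self hfx] at hi
      exact hi ▸ le_refl x
  have hsupp : ((cycMins π).filter (fun x => x ∈ π.support)).card
      = π.cycleFactorsFinset.card := by
    apply Finset.card_bij (fun x _ => π.cycleOf x)
    · intro x hx
      simp only [mem_filter] at hx
      exact Equiv.Perm.cycleOf_mem_cycleFactorsFinset_iff.2 hx.2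
    · intro x hx x' hx' h
      simp only [mem_filter, mem_cycMins] at hx hx'
      have h1 : π.SameCycle x x' := by
        have hx'' : x' ∈ (π.cycleOf x).support := by
          rw [h]
          exact Equiv.Perm.mem_support_cycleOf_iff.2
            ⟨Equiv.Perm.SameCycle.refl _ _, hx'.2⟩
        exact (Equiv.Perm.mem_support_cycleOf_iff.1 hx'').1
      exact le_antisymm (hx.1 x' h1) (hx'.1 x h1.symm)
    · intro c hc
      have hcyc : c.IsCycle := (Equiv.Perm.mem_cycleFactorsFinset_iff.1 hc).1
      have hne : c.support.Nonempty := by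
        rw [Finset.nonempty_iff_ne_empty, Ne, Equiv.Perm.support_eq_empty_iff]
        exact hcyc.ne_one
      set x := c.support.min' hne with hxdef
      have hxc : x ∈ c.support := Finset.min'_mem _ _
      have hcx : c = π.cycleOf x := Equiv.Perm.cycle_is_cycleOf hxc hc
      have hxs : x ∈ π.support := by
        rw [← Equiv.Perm.cycleOf_mem_cycleFactorsFinset_iff, ← hcx]; exact hc
      refine ⟨x, ?_, hcx.symm⟩
      simp only [mem_filter, mem_cycMins]
      refine ⟨fun y hy => ?_, hxs⟩
      by_cases hys : y ∈ π.support
      · have : y ∈ c.support := by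
          rw [hcx]
          exact Equiv.Perm.mem_support_cycleOf_iff.2 ⟨hy, hxs⟩
        exact Finset.min'_le _ y this
      · have hfy : π y = y := by simpa [Equiv.Perm.mem_support] using hys
        obtain ⟨i, hi⟩ := hy.symm
        rw [Equiv.Perm.zpow_apply_eq_self_of_apply_eq_self hfy] at hi
        exact hi ▸ le_refl x
  have hcompl : π.supportᶜ.card = k - π.support.card := by
    rw [Finset.card_compl, Fintype.card_fin]
  have hct : Multiset.card π.cycleType = π.cycleFactorsFinset.card := by
    rw [Equiv.Perm.cycleType_def, Multiset.card_map]; rfl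
  rw [hfix, hcompl] at hsplit
  unfold cycleCount
  rw [hct]
  omega

lemma sameCycle_closure {π' : Perm (Fin k)} (S : Fin k → Fin k → Prop)
    (hrefl : ∀ x, S x x) (htrans : ∀ {x y z}, S x y → S y z → S x z)
    (hstep : ∀ x, S x (π' x)) (hstep' : ∀ x, S x (π'⁻¹ x)) :
    ∀ {x y}, π'.SameCycle x y → S x y := by
  rintro x y ⟨i, rfl⟩
  induction i using Int.induction_on with
  | zero => simpa using hrefl x
  | succ n ih =>
      have h : (π' ^ ((n : ℤ) + 1)) x = π' ((π' ^ (n : ℤ)) x) := by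
        rw [add_comm, zpow_add, zpow_one, Equiv.Perm.mul_apply]
      rw [h]; exact htrans ih (hstep _)
  | pred n ih =>
      have h : (π' ^ (-(n : ℤ) - 1)) x = π'⁻¹ ((π' ^ (-(n : ℤ))) x) := by
        rw [sub_eq_add_neg, add_comm, zpow_add, zpow_neg, zpow_one, Equiv.Perm.mul_apply]
      rw [h]; exact htrans ih (hstep' _)

lemma mul_swap_inv_apply (π : Perm (Fin k)) (a b x : Fin k) :
    (π * Equiv.swap a b)⁻¹ x = Equiv.swap a b (π⁻¹ x) := by
  simp [mul_inv_rev, Equiv.Perm.mul_apply]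

/-- Splitting: if `a` and `b` are on the same cycle of `π`, every cycle of
`π * swap a b` is contained in a cycle of `π`. -/
lemma sameCycle_of_mul_swap {π : Perm (Fin k)} {a b : Fin k}
    (hab : π.SameCycle a b) :
    ∀ {x y}, (π * Equiv.swap a b).SameCycle x y → π.SameCycle x y := by
  have key : ∀ x, π.SameCycle x ((π * Equiv.swap a b) x) := by
    intro x
    have h : (π * Equiv.swap a b) x = π (Equiv.swap a b x) := rfl
    rw [h]
    rcases eq_or_ne x a with rfl | hxa
    · rw [Equiv.swap_apply_left]
      exact Equiv.Perm.sameCycle_apply_right.2 hab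
    rcases eq_or_ne x b with rfl | hxb
    · rw [Equiv.swap_apply_right]
      exact Equiv.Perm.sameCycle_apply_right.2 hab.symm
    · rw [Equiv.swap_apply_of_ne_of_ne hxa hxb]
      exact Equiv.Perm.sameCycle_apply_right.2 (Equiv.Perm.SameCycle.refl _ _)
  have key' : ∀ x, π.SameCycle x ((π * Equiv.swap a b)⁻¹ x) := by
    intro x
    rw [mul_swap_inv_apply]
    rcases eq_or_ne (π⁻¹ x) a with ha | ha
    · rw [ha, Equiv.swap_apply_left]
      have hx : π a = x := by rw [← ha]; exact π.apply_symm_apply x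
      exact hx ▸ (Equiv.Perm.sameCycle_apply_left.2 hab)
    rcases eq_or_ne (π⁻¹ x) b with hb | hb
    · rw [hb, Equiv.swap_apply_right]
      have hx : π b = x := by rw [← hb]; exact π.apply_symm_apply x
      exact hx ▸ (Equiv.Perm.sameCycle_apply_left.2 hab.symm)
    · rw [Equiv.swap_apply_of_ne_of_ne ha hb]
      exact Equiv.Perm.sameCycle_symm_apply_right.2 (Equiv.Perm.SameCycle.refl _ _)
  exact fun {x y} h => sameCycle_closure _ (fun x => Equiv.Perm.SameCycle.refl _ _)
    (fun h1 h2 => h1.trans h2) key key' h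

/-- Merging: if `a` and `b` are on different cycles of `π`, a cycle of
`π * swap a b` is contained in a cycle of `π` or in the union of the cycles of
`a` and `b`. -/
lemma sameCycle_mul_swap_cases {π : Perm (Fin k)} {a b : Fin k}
    (hab : ¬ π.SameCycle a b) :
    ∀ {x y}, (π * Equiv.swap a b).SameCycle x y →
      π.SameCycle x y ∨ (π.SameCycle x a ∧ π.SameCycle b y) ∨
        (π.SameCycle x b ∧ π.SameCycle a y) := by
  set S : Fin k → Fin k → Prop := fun x y =>
    π.SameCycle x y ∨ (π.SameCycle x a ∧ π.SameCycle b y) ∨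
      (π.SameCycle x b ∧ π.SameCycle a y) with hSdef
  have hrefl : ∀ x, S x x := fun x => Or.inl (Equiv.Perm.SameCycle.refl _ _)
  have htrans : ∀ {x y z}, S x y → S y z → S x z := by
    rintro x y z (h1 | ⟨hxa, hby⟩ | ⟨hxb, hay⟩) (h2 | ⟨hya, hbz⟩ | ⟨hyb, haz⟩)
    · exact Or.inl (h1.trans h2)
    · exact Or.inr (Or.inl ⟨h1.trans hya, hbz⟩)
    · exact Or.inr (Or.inr ⟨h1.trans hyb, haz⟩)
    · exact Or.inr (Or.inl ⟨hxa, hby.trans h2⟩)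
    · exact absurd (hby.trans hya).symm hab
    · exact Or.inl (hxa.trans haz)
    · exact Or.inr (Or.inr ⟨hxb, hay.trans h2⟩)
    · exact Or.inl (hxb.trans hbz)
    · exact absurd (hay.trans hyb) hab
  have key : ∀ x, S x ((π * Equiv.swap a b) x) := by
    intro x
    have h : (π * Equiv.swap a b) x = π (Equiv.swap a b x) := rfl
    rw [h]
    rcases eq_or_ne x a with rfl | hxa
    · rw [Equiv.swap_apply_left]
      exact Or.inr (Or.inl ⟨Equiv.Perm.SameCycle.refl _ _,
        Equiv.Perm.sameCycle_apply_right.2 (Equiv.Perm.SameCycle.refl _ _)⟩)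
    rcases eq_or_ne x b with rfl | hxb
    · rw [Equiv.swap_apply_right]
      exact Or.inr (Or.inr ⟨Equiv.Perm.SameCycle.refl _ _,
        Equiv.Perm.sameCycle_apply_right.2 (Equiv.Perm.SameCycle.refl _ _)⟩)
    · rw [Equiv.swap_apply_of_ne_of_ne hxa hxb]
      exact Or.inl (Equiv.Perm.sameCycle_apply_right.2 (Equiv.Perm.SameCycle.refl _ _))
  have key' : ∀ x, S x ((π * Equiv.swap a b)⁻¹ x) := by
    intro x
    rw [mul_swap_inv_apply]
    rcases eq_or_ne (π⁻¹ x) a with ha | ha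
    · rw [ha, Equiv.swap_apply_left]
      have hx : π a = x := by rw [← ha]; exact π.apply_symm_apply x
      exact Or.inr (Or.inl ⟨(hx ▸ Equiv.Perm.sameCycle_apply_left.2
        (Equiv.Perm.SameCycle.refl π a) : π.SameCycle x a),
        Equiv.Perm.SameCycle.refl _ _⟩)
    rcases eq_or_ne (π⁻¹ x) b with hb | hb
    · rw [hb, Equiv.swap_apply_right]
      have hx : π b = x := by rw [← hb]; exact π.apply_symm_apply x
      exact Or.inr (Or.inr ⟨(hx ▸ Equiv.Perm.sameCycle_apply_left.2
        (Equiv.Perm.SameCycle.refl π b) : π.SameCycle x b),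
        Equiv.Perm.SameCycle.refl _ _⟩)
    · rw [Equiv.swap_apply_of_ne_of_ne ha hb]
      exact Or.inl (Equiv.Perm.sameCycle_symm_apply_right.2 (Equiv.Perm.SameCycle.refl _ _))
  exact fun {x y} h => sameCycle_closure S hrefl htrans key key' h

lemma cycleCount_mul_swap_ne {π : Perm (Fin k)} {a b : Fin k} (hne : a ≠ b) :
    cycleCount (π * Equiv.swap a b) ≠ cycleCount π := by
  intro h
  have hs : ∀ ρ : Perm (Fin k),
      Equiv.Perm.sign ρ = (-1 : ℤˣ) ^ (ρ.support.card + Multiset.card ρ.cycleType) := by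
    intro ρ
    rw [← Equiv.Perm.sum_cycleType]
    exact Equiv.Perm.sign_of_cycleType ρ
  set s1 := (π * Equiv.swap a b).support.card with hs1
  set t1 := Multiset.card (π * Equiv.swap a b).cycleType with ht1
  set s2 := π.support.card with hs2
  set t2 := Multiset.card π.cycleType with ht2
  have hk1 : s1 ≤ k := by
    simpa using Finset.card_le_card (Finset.subset_univ (π * Equiv.swap a b).support)
  have hk2 : s2 ≤ k := by
    simpa using Finset.card_le_card (Finset.subset_univ π.support)
  have hcc : (k - s1) + t1 = (k - s2) + t2 := h
  have hsign : Equiv.Perm.sign (π * Equiv.swap a b) = Equiv.Perm.sign π := by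
    rw [hs, hs]
    rcases Nat.even_or_odd (s1 + t1) with hE | hO
    · have hE2 : Even (s2 + t2) := by
        rw [Nat.even_iff] at hE ⊢; omega
      rw [hE.neg_one_pow, hE2.neg_one_pow]
    · have hO2 : Odd (s2 + t2) := by
        rw [Nat.odd_iff] at hO ⊢; omega
      rw [hO.neg_one_pow, hO2.neg_one_pow]
  rw [Equiv.Perm.sign_mul, Equiv.Perm.sign_swap hne] at hsign
  have : (-1 : ℤˣ) = 1 := by
    have := mul_left_cancel (a := Equiv.Perm.sign π)
      (b := (-1 : ℤˣ)) (c := 1) (by rw [mul_one]; exact hsign)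
    exact this
  exact absurd this (by decide)

lemma split_le {π : Perm (Fin k)} {a b : Fin k} (hne : a ≠ b)
    (hab : π.SameCycle a b) :
    cycleCount π + 1 ≤ cycleCount (π * Equiv.swap a b) := by
  classical
  set π' := π * Equiv.swap a b with hπ'
  have hsub : ∀ {x y : Fin k}, π'.SameCycle x y → π.SameCycle x y :=
    fun {x y} h => sameCycle_of_mul_swap hab h
  have hG2 : ¬ π'.SameCycle a b := by
    intro h'
    have h3 : π' * Equiv.swap a b = π := by
      rw [hπ', mul_assoc, Equiv.swap_mul_self, mul_one]
    have hsub' : ∀ {x y : Fin k}, π.SameCycle x y → π'.SameCycle x y := by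
      intro x y hxy
      exact sameCycle_of_mul_swap h' (by rwa [h3])
    have hMeq : cycMins π' = cycMins π := by
      unfold cycMins
      apply Finset.filter_congr
      intro x _
      constructor
      · intro hx y hy; exact hx y (hsub' hy)
      · intro hx y hy; exact hx y (hsub hy)
    have hceq : cycleCount π' = cycleCount π := by
      rw [← card_cycMins, ← card_cycMins, hMeq]
    exact cycleCount_mul_swap_ne hne hceq
  have hMsub : cycMins π ⊆ cycMins π' := by
    intro x hx
    rw [mem_cycMins] at hx ⊢
    exact fun y hy => hx y (hsub hy)
  have hcls : ∀ z : Fin k, ∃ x, x ∈ cycMins π' ∧ π'.SameCycle z x := by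
    intro z
    have hzne : (univ.filter (fun y => π'.SameCycle z y)).Nonempty :=
      ⟨z, by simp [Equiv.Perm.SameCycle.refl]⟩
    refine ⟨(univ.filter (fun y => π'.SameCycle z y)).min' hzne, ?_, ?_⟩
    · rw [mem_cycMins]
      intro y hy
      have hzx : π'.SameCycle z ((univ.filter (fun y => π'.SameCycle z y)).min' hzne) := by
        have := Finset.min'_mem (univ.filter (fun y => π'.SameCycle z y)) hzne
        simpa using this
      exact Finset.min'_le _ y (by simp [hzx.trans hy])
    · have := Finset.min'_mem (univ.filter (fun y => π'.SameCycle z y)) hzne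
      simpa using this
  obtain ⟨xa, hxaM, hxa⟩ := hcls a
  obtain ⟨xb, hxbM, hxb⟩ := hcls b
  have hne2 : xa ≠ xb := by
    rintro rfl
    exact hG2 (hxa.trans hxb.symm)
  have hone : xa ∉ cycMins π ∨ xb ∉ cycMins π := by
    by_contra hcon
    push_neg at hcon
    obtain ⟨h1, h2⟩ := hcon
    rw [mem_cycMins] at h1 h2
    have hR : π.SameCycle xa xb := ((hsub hxa).symm.trans hab).trans (hsub hxb)
    exact hne2 (le_antisymm (h1 xb hR) (h2 xa hR.symm))
  have hstep : ∀ x, x ∈ cycMins π' → x ∉ cycMins π →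
      cycleCount π + 1 ≤ cycleCount π' := by
    intro x hxM hxout
    have hins : insert x (cycMins π) ⊆ cycMins π' := by
      rw [Finset.insert_subset_iff]; exact ⟨hxM, hMsub⟩
    calc cycleCount π + 1 = (cycMins π).card + 1 := by rw [card_cycMins]
      _ = (insert x (cycMins π)).card := (Finset.card_insert_of_notMem hxout).symm
      _ ≤ (cycMins π').card := Finset.card_le_card hins
      _ = cycleCount π' := card_cycMins _
  rcases hone with hout | hout
  · exact hstep xa hxaM hout
  · exact hstep xb hxbM hout

lemma merge_le {π : Perm (Fin k)} {a b : Fin k} (hab : ¬ π.SameCycle a b) :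
    cycleCount π ≤ cycleCount (π * Equiv.swap a b) + 1 := by
  classical
  set π' := π * Equiv.swap a b with hπ'
  have hsd : ((cycMins π) \ (cycMins π')).card ≤ 1 := by
    rw [Finset.card_le_one]
    intro x hx x' hx'
    rw [Finset.mem_sdiff] at hx hx'
    obtain ⟨hxM, hxnot⟩ := hx
    obtain ⟨hx'M, hx'not⟩ := hx'
    rw [mem_cycMins] at hxM hx'M
    rw [mem_cycMins] at hxnot hx'not
    push_neg at hxnot hx'not
    obtain ⟨y, hy, hylt⟩ := hxnot
    obtain ⟨y', hy', hy'lt⟩ := hx'not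
    have hxcase : (π.SameCycle x a ∧ π.SameCycle b y) ∨
        (π.SameCycle x b ∧ π.SameCycle a y) := by
      rcases sameCycle_mul_swap_cases hab hy with h | h | h
      · exact absurd (hxM y h) (not_le.2 hylt)
      · exact Or.inl h
      · exact Or.inr h
    have hx'case : (π.SameCycle x' a ∧ π.SameCycle b y') ∨
        (π.SameCycle x' b ∧ π.SameCycle a y') := by
      rcases sameCycle_mul_swap_cases hab hy' with h | h | h
      · exact absurd (hx'M y' h) (not_le.2 hy'lt)
      · exact Or.inl h
      · exact Or.inr h
    rcases hxcase with ⟨hxa, hby⟩ | ⟨hxb, hay⟩ <;>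
      rcases hx'case with ⟨hx'a, hby'⟩ | ⟨hx'b, hay'⟩
    · have hR : π.SameCycle x x' := hxa.trans hx'a.symm
      exact le_antisymm (hxM x' hR) (hx'M x hR.symm)
    · -- x ~ a, b ~ y ; x' ~ b, a ~ y'
      have h1 : x ≤ y' := hxM y' (hxa.trans hay')
      have h2 : x' ≤ y := hx'M y (hx'b.trans hby)
      exact absurd (lt_of_le_of_lt h1 (lt_of_lt_of_le hy'lt
        (le_trans h2 (le_of_lt hylt)))) (lt_irrefl x)
    · have h1 : x ≤ y' := hxM y' (hxb.trans hby')
      have h2 : x' ≤ y := hx'M y (hx'a.trans hay)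
      exact absurd (lt_of_le_of_lt h1 (lt_of_lt_of_le hy'lt
        (le_trans h2 (le_of_lt hylt)))) (lt_irrefl x)
    · have hR : π.SameCycle x x' := hxb.trans hx'b.symm
      exact le_antisymm (hxM x' hR) (hx'M x hR.symm)
  have hinter : (cycMins π ∩ cycMins π').card ≤ (cycMins π').card :=
    Finset.card_le_card Finset.inter_subset_right
  have hdecomp := Finset.card_sdiff_add_card_inter (cycMins π) (cycMins π')
  have h1 := card_cycMins π
  have h2 := card_cycMins π'
  omega

end MinCovAux

/-- A closed `D`-colored graph `B` on `k` white and `k` black vertices is encoded by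
permutations `m i : Fin k ≃ Fin k` (the edge of color `i` joins the white vertex `w`
to the black vertex `m i w`).  A covering graph of `B` adds a perfect matching of
color-0 edges, encoded by a permutation `σ` (the color-0 edge at `w` joins it to the
black vertex `σ w`); its faces of colors `0i` are the cycles of `σ ∘ (m i)⁻¹`-type
composition `σ.trans (m i).symm`, so `Σᵢ F⁰ⁱ = Σᵢ c(σ.trans (m i).symm)`.
If `σ` is a **minimal covering** (it maximizes `Σᵢ F⁰ⁱ` among all matchings), then
any two distinct color-0 edges (labeled by their white endpoints `w ≠ w'`) share at
most `⌊D/2⌋` of the faces of colors `0i`, i.e.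
`2·#{i | the 0i-faces of the two edges coincide} ≤ D`. -/
theorem minimal_covering_shared_faces (D k : ℕ)
    (m : Fin D → Equiv.Perm (Fin k)) (σ : Equiv.Perm (Fin k))
    (hmin : ∀ σ' : Equiv.Perm (Fin k),
      ∑ i : Fin D, cycleCount (σ'.trans (m i).symm) ≤
        ∑ i : Fin D, cycleCount (σ.trans (m i).symm)) :
    ∀ w w' : Fin k, w ≠ w' →
      2 * (Finset.univ.filter (fun i : Fin D =>
        Equiv.Perm.SameCycle (σ.trans (m i).symm) w w')).card ≤ D := by
  classical
  intro w w' hww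
  set σ' := (Equiv.swap w w').trans σ with hσ'
  have hτ : ∀ i : Fin D,
      σ'.trans (m i).symm = (σ.trans (m i).symm) * Equiv.swap w w' := by
    intro i
    exact Equiv.ext fun x => rfl
  have hm := hmin σ'
  simp only [hτ] at hm
  set P := Finset.univ.filter (fun i : Fin D =>
    Equiv.Perm.SameCycle (σ.trans (m i).symm) w w') with hP
  have h1 : ∑ i ∈ P, cycleCount (σ.trans (m i).symm) + P.card ≤
      ∑ i ∈ P, cycleCount ((σ.trans (m i).symm) * Equiv.swap w w') := by
    have hle := Finset.sum_le_sum (s := P)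
      (f := fun i => cycleCount (σ.trans (m i).symm) + 1)
      (g := fun i => cycleCount ((σ.trans (m i).symm) * Equiv.swap w w'))
      (fun i hi => MinCovAux.split_le hww (by
        rw [hP] at hi; simpa using (Finset.mem_filter.1 hi).2))
    simpa [Finset.sum_add_distrib] using hle
  have h2 : ∑ i ∈ Pᶜ, cycleCount (σ.trans (m i).symm) ≤
      ∑ i ∈ Pᶜ, cycleCount ((σ.trans (m i).symm) * Equiv.swap w w') + Pᶜ.card := by
    have hle := Finset.sum_le_sum (s := Pᶜ)
      (f := fun i => cycleCount (σ.trans (m i).symm))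
      (g := fun i => cycleCount ((σ.trans (m i).symm) * Equiv.swap w w') + 1)
      (fun i hi => MinCovAux.merge_le (by
        rw [hP] at hi
        rw [Finset.mem_compl, Finset.mem_filter] at hi
        simpa using fun hh => hi ⟨Finset.mem_univ i, hh⟩))
    simpa [Finset.sum_add_distrib] using hle
  have e1 : ∑ i ∈ P, cycleCount (σ.trans (m i).symm) +
      ∑ i ∈ Pᶜ, cycleCount (σ.trans (m i).symm) =
      ∑ i : Fin D, cycleCount (σ.trans (m i).symm) :=
    Finset.sum_add_sum_compl P _
  have e2 : ∑ i ∈ P, cycleCount ((σ.trans (m i).symm) * Equiv.swap w w') +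
      ∑ i ∈ Pᶜ, cycleCount ((σ.trans (m i).symm) * Equiv.swap w w') =
      ∑ i : Fin D, cycleCount ((σ.trans (m i).symm) * Equiv.swap w w') :=
    Finset.sum_add_sum_compl P _
  have hcard : P.card + Pᶜ.card = D := by
    simp [Finset.card_add_card_compl P]
  omega
end
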